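/- Let ℓ ≥ 4, s ≥ 0, k = ⌊(ℓ−2)/2⌋, and let G be a B(ℓ,s)-free graph. Suppose H is an r-uniform hypergraph on the vertex set of G such that every hyperedge of H is an r-set of vertices having more than ℓ+s common neighbors in G, where 2k+2 ≤ ℓ+s. Then H contains no Berge path with k+1 hyperedges. -/

import Mathlib

open scoped Classical
open Finset SimpleGraph
open Fin.NatCast

/-- The broom `B(ℓ,s)`: a path on vertices `0,…,ℓ-1` plus `s` extra leaves
`ℓ,…,ℓ+s-1` attached to the penultimate vertex `ℓ-2` of the path. -/
def broom (ℓ s : ℕ) : SimpleGraph (Fin (ℓ + s)) :=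
  SimpleGraph.fromRel (fun a b => (a.val + 1 = b.val ∧ b.val < ℓ) ∨ (a.val = ℓ - 2 ∧ ℓ ≤ b.val))

/-- `G` contains no subgraph isomorphic to the broom `B(ℓ,s)`. -/
def BroomFree (ℓ s : ℕ) {V : Type*} (G : SimpleGraph V) : Prop :=
  ¬ ∃ f : broom ℓ s →g G, Function.Injective f

/-- A Berge path with `t` hyperedges: distinct hyperedges `h 0, …, h (t-1)` and distinct
vertices `v 0, …, v t` with `v i, v (i+1) ∈ h i`. -/
def HasBergePath {V : Type*} (H : Finset (Finset V)) (t : ℕ) : Prop :=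
  ∃ (h : Fin t → Finset V) (v : Fin (t + 1) → V),
    Function.Injective h ∧ Function.Injective v ∧
    (∀ i, h i ∈ H) ∧ ∀ i : Fin t, v i.castSucc ∈ h i ∧ v i.succ ∈ h i

/-- If `G` is `B(ℓ,s)`-free with `k = ⌊(ℓ-2)/2⌋` and `2k+2 ≤ ℓ+s`, and every
hyperedge of the `r`-uniform hypergraph `H` on `V(G)` is an `r`-set of vertices with
more than `ℓ+s` common neighbors in `G`, then `H` has no Berge path with `k+1`
hyperedges. -/
lemma exists_inj_avoid {V : Type*} [DecidableEq V] :
    ∀ (n : ℕ) (N : Fin n → Finset V) (A : Finset V),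
      (∀ i, A.card + n ≤ (N i).card) →
      ∃ u : Fin n → V, Function.Injective u ∧ ∀ i, u i ∈ N i ∧ u i ∉ A := by
  intro n
  induction n with
  | zero =>
    exact fun N A _ => ⟨fun i => i.elim0, fun i => i.elim0, fun i => i.elim0⟩
  | succ m ih =>
    intro N A hcard
    have hne : (N 0 \ A).Nonempty := by
      rw [Finset.nonempty_iff_ne_empty]
      intro hemp
      rw [Finset.sdiff_eq_empty_iff_subset] at hemp
      have h1 := Finset.card_le_card hemp
      have h2 := hcard 0
      omega
    obtain ⟨x, hx⟩ := hne
    rw [Finset.mem_sdiff] at hx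
    obtain ⟨u', hu'inj, hu'⟩ := ih (fun i => N i.succ) (insert x A)
      (fun i => by
        show (insert x A).card + m ≤ (N i.succ).card
        have h1 := Finset.card_insert_le x A
        have h2 := hcard i.succ
        omega)
    refine ⟨Fin.cases x u', ?_, ?_⟩
    · intro i j hij
      induction i using Fin.cases with
      | zero =>
        induction j using Fin.cases with
        | zero => rfl
        | succ j =>
          exfalso
          simp only [Fin.cases_zero, Fin.cases_succ] at hij
          exact (hu' j).2 (hij ▸ Finset.mem_insert_self x A)
      | succ i =>
        induction j using Fin.cases with
        | zero =>
          exfalso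
          simp only [Fin.cases_zero, Fin.cases_succ] at hij
          exact (hu' i).2 (hij ▸ Finset.mem_insert_self x A)
        | succ j =>
          simp only [Fin.cases_succ] at hij
          exact congrArg Fin.succ (hu'inj hij)
    · intro i
      induction i using Fin.cases with
      | zero => exact ⟨by simpa using hx.1, by simpa using hx.2⟩
      | succ i =>
        refine ⟨by simpa using (hu' i).1, fun hmem => (hu' i).2 ?_⟩
        simp only [Fin.cases_succ] at hmem
        exact Finset.mem_insert_of_mem hmem

theorem no_berge_path_of_broomFree {V : Type*} [Fintype V] (ℓ s k r : ℕ) (hℓ : 4 ≤ ℓ)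
    (hk : k = (ℓ - 2) / 2) (hks : 2 * k + 2 ≤ ℓ + s)
    (G : SimpleGraph V) (hG : BroomFree ℓ s G) (H : Finset (Finset V))
    (hH : ∀ e ∈ H, e.card = r ∧
      ℓ + s < (Finset.univ.filter (fun u => ∀ x ∈ e, G.Adj x u)).card) :
    ¬ HasBergePath H (k + 1) := by
  rintro ⟨h, v, -, hvinj, hmem, hev⟩
  classical
  set N : Fin (k + 1) → Finset V :=
    fun i => Finset.univ.filter (fun u => ∀ x ∈ h i, G.Adj x u) with hN
  have hNcard : ∀ i, ℓ + s < (N i).card := fun i => (hH (h i) (hmem i)).2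
  -- choose the intermediate vertices u i, common neighbors of h i, avoiding all v j
  obtain ⟨u, huinj, hu⟩ := exists_inj_avoid (k + 1) N (Finset.univ.image v)
    (fun i => by
      have h1 : (Finset.univ.image v).card ≤ k + 2 :=
        (Finset.card_image_le).trans (by simp)
      have h2 := hNcard i
      omega)
  have huv : ∀ i j, u i ≠ v j := fun i j hiv =>
    (hu i).2 (hiv ▸ Finset.mem_image_of_mem v (Finset.mem_univ j))
  have hadj : ∀ (i : Fin (k + 1)) (x : V), x ∈ h i → G.Adj x (u i) := by
    intro i x hx
    have h1 := (hu i).1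
    rw [hN, Finset.mem_filter] at h1
    exact h1.2 x hx
  -- the offset d: we use the last ℓ-1 vertices of the zig-zag path
  set d : ℕ := 2 * k + 4 - ℓ with hd
  have hdb : 1 ≤ d ∧ d ≤ 2 ∧ d + (ℓ - 2) = 2 * k + 2 := by omega
  haveI : NeZero (ℓ - 1) := ⟨by omega⟩
  -- the path p
  set p : Fin (ℓ - 1) → V := fun a =>
    if (d + a.val) % 2 = 0 then v (((d + a.val) / 2 : ℕ) : Fin (k + 2))
    else u (((d + a.val) / 2 : ℕ) : Fin (k + 1)) with hp
  have hpv : ∀ (m : ℕ) (a : Fin (ℓ - 1)), d + a.val = 2 * m → ∀ hm : m < k + 2,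
      p a = v ⟨m, hm⟩ := by
    intro m a ha hm
    have he : (d + a.val) % 2 = 0 := by omega
    have hq : (d + a.val) / 2 = m := by omega
    rw [hp]
    simp only [he, if_pos, hq]
    exact congrArg v (Fin.ext (Fin.val_cast_of_lt hm))
  have hpu : ∀ (m : ℕ) (a : Fin (ℓ - 1)), d + a.val = 2 * m + 1 → ∀ hm : m < k + 1,
      p a = u ⟨m, hm⟩ := by
    intro m a ha hm
    have he : ¬ (d + a.val) % 2 = 0 := by omega
    have hq : (d + a.val) / 2 = m := by omega
    rw [hp]
    simp only [he, if_neg, if_false, hq]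
    exact congrArg u (Fin.ext (Fin.val_cast_of_lt hm))
  -- injectivity of p
  have hpinj : Function.Injective p := by
    intro a b hab
    have ha2 : d + a.val ≤ 2 * k + 2 := by have := a.isLt; omega
    have hb2 : d + b.val ≤ 2 * k + 2 := by have := b.isLt; omega
    rcases Nat.even_or_odd (d + a.val) with ⟨m, hm⟩ | ⟨m, hm⟩ <;>
      rcases Nat.even_or_odd (d + b.val) with ⟨m', hm'⟩ | ⟨m', hm'⟩
    · have hma : m < k + 2 := by omega
      have hmb : m' < k + 2 := by omega
      rw [hpv m a (by omega) hma, hpv m' b (by omega) hmb] at hab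
      have hmm : m = m' := by simpa [Fin.mk.injEq] using hvinj hab
      exact Fin.ext (by omega)
    · have hma : m < k + 2 := by omega
      have hmb : m' < k + 1 := by omega
      rw [hpv m a (by omega) hma, hpu m' b (by omega) hmb] at hab
      exact absurd hab.symm (huv _ _)
    · have hma : m < k + 1 := by omega
      have hmb : m' < k + 2 := by omega
      rw [hpu m a (by omega) hma, hpv m' b (by omega) hmb] at hab
      exact absurd hab (huv _ _)
    · have hma : m < k + 1 := by omega
      have hmb : m' < k + 1 := by omega
      rw [hpu m a (by omega) hma, hpu m' b (by omega) hmb] at hab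
      have hmm : m = m' := by simpa [Fin.mk.injEq] using huinj hab
      exact Fin.ext (by omega)
  set P : Finset V := Finset.univ.image p with hP
  have hPcard : P.card = ℓ - 1 := by
    rw [hP, Finset.card_image_of_injective _ hpinj, Finset.card_univ, Fintype.card_fin]
  have hklt : k < k + 1 := by omega
  -- choose the leaves and the final path vertex, common neighbors of h ⟨k⟩ off the path
  obtain ⟨y, hyinj, hy⟩ := exists_inj_avoid (s + 1) (fun _ => N ⟨k, hklt⟩) P
    (fun i => by
      show P.card + (s + 1) ≤ (N ⟨k, hklt⟩).card
      have h2 := hNcard ⟨k, hklt⟩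
      omega)
  have hyadj : ∀ (j : Fin (s + 1)) (x : V), x ∈ h ⟨k, hklt⟩ → G.Adj x (y j) := by
    intro j x hx
    have h1 := (hy j).1
    simp only [hN, Finset.mem_filter] at h1
    exact h1.2 x hx
  have hvlast : v ⟨k + 1, by omega⟩ ∈ h ⟨k, hklt⟩ := by
    have := (hev ⟨k, hklt⟩).2
    simpa [Fin.succ] using this
  -- the broom embedding
  set f : Fin (ℓ + s) → V := fun a =>
    if h : a.val < ℓ - 1 then p ⟨a.val, h⟩
    else y ⟨a.val - (ℓ - 1), by have := a.isLt; omega⟩ with hf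
  have hf1 : ∀ (a : Fin (ℓ + s)) (hlt : a.val < ℓ - 1), f a = p ⟨a.val, hlt⟩ := by
    intro a hlt
    rw [hf]
    simp only [hlt, dif_pos]
  have hf2 : ∀ (a : Fin (ℓ + s)) (hge : ¬ a.val < ℓ - 1),
      f a = y ⟨a.val - (ℓ - 1), by have := a.isLt; omega⟩ := by
    intro a hge
    rw [hf]
    simp only [hge, dif_neg, dite_false]
  -- key adjacency
  have key : ∀ a b : Fin (ℓ + s),
      ((a.val + 1 = b.val ∧ b.val < ℓ) ∨ (a.val = ℓ - 2 ∧ ℓ ≤ b.val)) →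
      G.Adj (f a) (f b) := by
    rintro a b (⟨hab, hbl⟩ | ⟨ha, hb⟩)
    · by_cases hb1 : b.val < ℓ - 1
      · have ha1 : a.val < ℓ - 1 := by omega
        rw [hf1 a ha1, hf1 b hb1]
        rcases Nat.even_or_odd (d + a.val) with ⟨m, hm⟩ | ⟨m, hm⟩
        · have hmk : m ≤ k := by omega
          rw [hpv m ⟨a.val, ha1⟩ (by show d + a.val = 2 * m; omega) (by omega),
              hpu m ⟨b.val, hb1⟩ (by show d + b.val = 2 * m + 1; omega) (by omega)]
          refine hadj ⟨m, by omega⟩ _ ?_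
          have := (hev ⟨m, by omega⟩).1
          simpa [Fin.castSucc, Fin.castAdd, Fin.castLE] using this
        · have hmk : m ≤ k := by omega
          rw [hpu m ⟨a.val, ha1⟩ (by show d + a.val = 2 * m + 1; omega) (by omega),
              hpv (m + 1) ⟨b.val, hb1⟩ (by show d + b.val = 2 * (m + 1); omega) (by omega)]
          refine (hadj ⟨m, by omega⟩ _ ?_).symm
          have := (hev ⟨m, by omega⟩).2
          simpa [Fin.succ] using this
      · -- b.val = ℓ - 1
        have hb0 : b.val = ℓ - 1 := by omega
        have ha1 : a.val < ℓ - 1 := by omega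
        rw [hf1 a ha1, hf2 b hb1]
        have ha2 : a.val = ℓ - 2 := by omega
        rw [hpv (k + 1) ⟨a.val, ha1⟩ (by show d + a.val = 2 * (k + 1); omega) (by omega)]
        exact hyadj _ _ hvlast
    · have ha1 : a.val < ℓ - 1 := by omega
      have hb1 : ¬ b.val < ℓ - 1 := by omega
      rw [hf1 a ha1, hf2 b hb1]
      rw [hpv (k + 1) ⟨a.val, ha1⟩ (by show d + a.val = 2 * (k + 1); omega) (by omega)]
      exact hyadj _ _ hvlast
  -- injectivity of f
  have hfinj : Function.Injective f := by
    intro a b hab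
    by_cases ha1 : a.val < ℓ - 1 <;> by_cases hb1 : b.val < ℓ - 1
    · rw [hf1 a ha1, hf1 b hb1] at hab
      have := congrArg Fin.val (hpinj hab)
      exact Fin.ext (by simpa using this)
    · rw [hf1 a ha1, hf2 b hb1] at hab
      exact absurd (hab ▸ Finset.mem_image_of_mem p (Finset.mem_univ _)) (hy _).2
    · rw [hf2 a ha1, hf1 b hb1] at hab
      exact absurd (hab ▸ Finset.mem_image_of_mem p (Finset.mem_univ _)) (hy _).2
    · rw [hf2 a ha1, hf2 b hb1] at hab
      have := congrArg Fin.val (hyinj hab)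
      simp only at this
      exact Fin.ext (by omega)
  exact hG ⟨⟨f, fun {a b} hab => by
    rw [broom, SimpleGraph.fromRel_adj] at hab
    obtain ⟨-, hr | hr⟩ := hab
    · exact key a b hr
    · exact (key b a hr).symm⟩, hfinj⟩
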